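/- (Example 3.7, Step 1.) On Z = [0, ∞) ⊆ ℝ define G(x,y,z) = exp(|x − y| + |y − z| + |z − x|), and define F : Z → Z by F x = x/2 if 0 ≤ x < 1/2 and F x = x − 1/4 if x ≥ 1/2. Then for all x, y, z ∈ [0, 1/2) one has G(Fx, Fy, Fz) ≤ M^{5/8}, where M = max{ G(x,y,z), G(x,Fx,Fx), G(y,Fy,Fy), G(x,Fy,Fy), min{G(z,Fx,Fx), G(x,z,z)} }; and moreover G(1/3, F(1/3), F(1/3)) = e^{1/3} ≤ 33/16. -/
import Mathlib


noncomputable def Gexp : ℝ → ℝ → ℝ → ℝ :=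
  fun x y z => Real.exp (|x - y| + |y - z| + |z - x|)

noncomputable def F37 : ℝ → ℝ :=
  fun x => if x < 1 / 2 then x / 2 else x - 1 / 4

theorem example_3_7_step1 :
    (∀ x y z : ℝ, 0 ≤ x → x < 1 / 2 → 0 ≤ y → y < 1 / 2 → 0 ≤ z → z < 1 / 2 →
      Gexp (F37 x) (F37 y) (F37 z) ≤
        (max (Gexp x y z)
          (max (Gexp x (F37 x) (F37 x))
            (max (Gexp y (F37 y) (F37 y))
              (max (Gexp x (F37 y) (F37 y))
                (min (Gexp z (F37 x) (F37 x)) (Gexp x z z)))))) ^ ((5 : ℝ) / 8)) ∧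
    Gexp (1 / 3) (F37 (1 / 3)) (F37 (1 / 3)) = Real.exp (1 / 3) ∧
    Real.exp (1 / 3) ≤ 33 / 16 := by
  refine ⟨?_, ?_, ?_⟩
  · intro x y z hx0 hx hy0 hy hz0 hz
    have hFx : F37 x = x / 2 := if_pos hx
    have hFy : F37 y = y / 2 := if_pos hy
    have hFz : F37 z = z / 2 := if_pos hz
    set S : ℝ := |x - y| + |y - z| + |z - x| with hS
    have hS0 : 0 ≤ S := by positivity
    have hL : Gexp (F37 x) (F37 y) (F37 z) = Real.exp (S / 2) := by
      simp only [Gexp, hFx, hFy, hFz, hS]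
      congr 1
      rw [show x / 2 - y / 2 = (x - y) / 2 by ring,
          show y / 2 - z / 2 = (y - z) / 2 by ring,
          show z / 2 - x / 2 = (z - x) / 2 by ring,
          abs_div, abs_div, abs_div]
      simp [abs_of_pos]
      ring
    have hG : Gexp x y z = Real.exp S := rfl
    have hmax : Real.exp S ≤
        (max (Gexp x y z)
          (max (Gexp x (F37 x) (F37 x))
            (max (Gexp y (F37 y) (F37 y))
              (max (Gexp x (F37 y) (F37 y))
                (min (Gexp z (F37 x) (F37 x)) (Gexp x z z)))))) := by
      rw [← hG]; exact le_max_left _ _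
    calc Gexp (F37 x) (F37 y) (F37 z) = Real.exp (S / 2) := hL
      _ ≤ Real.exp (S * (5 / 8)) := by
          apply Real.exp_le_exp.mpr; nlinarith
      _ = (Real.exp S) ^ ((5 : ℝ) / 8) := by
          rw [← Real.exp_mul]
      _ ≤ _ := by
          apply Real.rpow_le_rpow (Real.exp_pos S).le hmax (by norm_num)
  · have h13 : (1 : ℝ) / 3 < 1 / 2 := by norm_num
    have hF : F37 (1 / 3) = 1 / 6 := by
      simp only [F37, if_pos h13]; norm_num
    rw [hF]
    simp only [Gexp]
    norm_num [abs_of_nonneg, abs_of_nonpos]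
  · have ha : Real.exp ((1 : ℝ) / 3) ^ (3 : ℕ) = Real.exp 1 := by
      rw [← Real.exp_nat_mul]; norm_num
    have he : Real.exp 1 < 2.7182818286 := Real.exp_one_lt_d9
    by_contra h
    push_neg at h
    have h3 : ((33 : ℝ) / 16) ^ (3 : ℕ) < Real.exp (1 / 3) ^ (3 : ℕ) :=
      pow_lt_pow_left₀ h (by norm_num) (by norm_num)
    rw [ha] at h3
    norm_num at h3
    linarith
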